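/- Let n ≥ 1, let T ∈ ℝ^{n×n} be the tridiagonal Toeplitz matrix with 2 on the diagonal and −1 on the first sub- and superdiagonals, and let U ∈ ℝ^{n×2} have columns √2·e₁ and √2·e_n. Then the matrix M = (I + T⁻¹U (T⁻¹U)ᵗ)⁻¹ exists and its entries are given explicitly by: m_{i,j} = q₀(n) + q₁(n)(i + j) + q₂(n)·i·j for i ≠ j, and m_{i,i} = 1 + q₀(n) + 2q₁(n)·i + q₂(n)·i² for all i, where q₀(n) = −(4n² + 8n + 6)/((n+1)(n² + 2n + 3)), q₁(n) = 6/(n² + 2n + 3), and q₂(n) = −12/((n+1)(n² + 2n + 3)). -/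

import Mathlib

open scoped ENNReal
open Matrix

/-- The `n × n` tridiagonal Toeplitz matrix `tridiag(-1, 2, -1)`. -/
def Tmat (n : ℕ) : Matrix (Fin n) (Fin n) ℝ :=
  Matrix.of fun i j =>
    if (i : ℕ) = (j : ℕ) then 2
    else if (j : ℕ) = (i : ℕ) + 1 ∨ (i : ℕ) = (j : ℕ) + 1 then -1
    else 0

/-- The `n × 2` matrix whose columns are `√2·e₁` and `√2·eₙ`. -/
noncomputable def Umat (n : ℕ) : Matrix (Fin n) (Fin 2) ℝ :=
  Matrix.of fun i k =>
    if k = 0 then (if (i : ℕ) = 0 then Real.sqrt 2 else 0)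
    else (if (i : ℕ) = n - 1 then Real.sqrt 2 else 0)

/-- Integer-indexed version of the inverse of `Tmat`. -/
noncomputable def sfun (n : ℕ) (i j : ℤ) : ℝ :=
  if j ≤ i then ((j : ℝ) + 1) * ((n : ℝ) - (i : ℝ)) / ((n : ℝ) + 1)
  else ((i : ℝ) + 1) * ((n : ℝ) - (j : ℝ)) / ((n : ℝ) + 1)

noncomputable def Smat (n : ℕ) : Matrix (Fin n) (Fin n) ℝ :=
  Matrix.of fun i j => sfun n ((i : ℕ) : ℤ) ((j : ℕ) : ℤ)

lemma hn1ne (n : ℕ) : ((n : ℝ) + 1) ≠ 0 := by positivity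

lemma sfun_of_le (n : ℕ) {i j : ℤ} (h : j ≤ i) :
    sfun n i j = ((j : ℝ) + 1) * ((n : ℝ) - (i : ℝ)) / ((n : ℝ) + 1) := if_pos h

lemma sfun_of_gt (n : ℕ) {i j : ℤ} (h : i < j) :
    sfun n i j = ((i : ℝ) + 1) * ((n : ℝ) - (j : ℝ)) / ((n : ℝ) + 1) :=
  if_neg (by omega)

lemma sfun_second_diff (n : ℕ) (i j : ℤ) (hi : 0 ≤ i) (hi' : i < n) (hj : 0 ≤ j)
    (hj' : j < n) :
    2 * sfun n i j - sfun n (i + 1) j - sfun n (i - 1) j = if i = j then 1 else 0 := by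
  have hne := hn1ne n
  rcases lt_trichotomy j i with hlt | heq | hgt
  · -- j ≤ i - 1
    rw [sfun_of_le n (by omega), sfun_of_le n (by omega), sfun_of_le n (by omega),
      if_neg (by omega)]
    push_cast
    field_simp
    ring
  · -- j = i
    subst heq
    rw [sfun_of_le n (by omega), sfun_of_le n (by omega), sfun_of_gt n (by omega),
      if_pos rfl]
    push_cast
    field_simp
    ring
  · rcases eq_or_lt_of_le (by omega : i + 1 ≤ j) with heq | hgt2
    · -- j = i + 1
      subst heq
      rw [sfun_of_gt n (by omega), sfun_of_le n (by omega), sfun_of_gt n (by omega),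
        if_neg (by omega)]
      push_cast
      field_simp
      ring
    · -- i + 1 < j
      rw [sfun_of_gt n (by omega), sfun_of_gt n (by omega), sfun_of_gt n (by omega),
        if_neg (by omega)]
      push_cast
      field_simp
      ring

lemma sfun_right (n : ℕ) (j : ℤ) (hj : 0 ≤ j) (hj' : j ≤ n) : sfun n n j = 0 := by
  unfold sfun
  rw [if_pos hj']
  simp

lemma sfun_left (n : ℕ) (j : ℤ) (hj : 0 ≤ j) : sfun n (-1) j = 0 := by
  unfold sfun
  rw [if_neg (by omega)]
  push_cast
  ring

lemma TS (n : ℕ) : Tmat n * Smat n = 1 := by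
  ext i j
  rw [Matrix.mul_apply]
  have hstep : ∀ k : Fin n, Tmat n i k * Smat n k j =
      (fun m : ℕ =>
        (if m = (i : ℕ) then 2 * sfun n (m : ℤ) ((j : ℕ) : ℤ) else 0) +
        ((if m = (i : ℕ) + 1 then -(sfun n (m : ℤ) ((j : ℕ) : ℤ)) else 0) +
         (if m + 1 = (i : ℕ) then -(sfun n (m : ℤ) ((j : ℕ) : ℤ)) else 0))) ((k : ℕ)) := by
    intro k
    simp only [Tmat, Smat, Matrix.of_apply]
    split_ifs <;> first | ring1 | (exfalso; omega)
  rw [Finset.sum_congr rfl (fun k _ => hstep k),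
    Fin.sum_univ_eq_sum_range (fun m : ℕ =>
        (if m = (i : ℕ) then 2 * sfun n (m : ℤ) ((j : ℕ) : ℤ) else 0) +
        ((if m = (i : ℕ) + 1 then -(sfun n (m : ℤ) ((j : ℕ) : ℤ)) else 0) +
         (if m + 1 = (i : ℕ) then -(sfun n (m : ℤ) ((j : ℕ) : ℤ)) else 0))) n,
    Finset.sum_add_distrib, Finset.sum_add_distrib]
  have T1 : ∑ m ∈ Finset.range n, (if m = (i : ℕ) then 2 * sfun n (m : ℤ) ((j : ℕ) : ℤ) else 0)
      = 2 * sfun n ((i : ℕ) : ℤ) ((j : ℕ) : ℤ) := by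
    rw [Finset.sum_ite_eq' (Finset.range n) ((i : ℕ)) fun m => 2 * sfun n (m : ℤ) ((j : ℕ) : ℤ),
      if_pos (Finset.mem_range.mpr i.isLt)]
  have T2 : ∑ m ∈ Finset.range n,
        (if m = (i : ℕ) + 1 then -(sfun n (m : ℤ) ((j : ℕ) : ℤ)) else 0)
      = -(sfun n (((i : ℕ) : ℤ) + 1) ((j : ℕ) : ℤ)) := by
    rw [Finset.sum_ite_eq' (Finset.range n) ((i : ℕ) + 1)
      fun m => -(sfun n (m : ℤ) ((j : ℕ) : ℤ))]
    by_cases h : (i : ℕ) + 1 < n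
    · rw [if_pos (Finset.mem_range.mpr h)]
      norm_num
    · rw [if_neg (by simp only [Finset.mem_range]; omega)]
      have hin : ((i : ℕ) : ℤ) + 1 = (n : ℤ) := by
        have := i.isLt; omega
      rw [hin, sfun_right n _ (by positivity) (by exact_mod_cast le_of_lt j.isLt)]
      norm_num
  have T3 : ∑ m ∈ Finset.range n,
        (if m + 1 = (i : ℕ) then -(sfun n (m : ℤ) ((j : ℕ) : ℤ)) else 0)
      = -(sfun n (((i : ℕ) : ℤ) - 1) ((j : ℕ) : ℤ)) := by
    by_cases h0 : (i : ℕ) = 0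
    · have : ∀ m ∈ Finset.range n,
          (if m + 1 = (i : ℕ) then -(sfun n (m : ℤ) ((j : ℕ) : ℤ)) else 0) = 0 := by
        intro m _; rw [if_neg (by omega)]
      rw [Finset.sum_congr rfl this, Finset.sum_const, smul_zero, h0]
      norm_num
      rw [sfun_left n _ (by positivity)]
    · have hcong : ∀ m ∈ Finset.range n,
          (if m + 1 = (i : ℕ) then -(sfun n (m : ℤ) ((j : ℕ) : ℤ)) else 0)
          = (if m = (i : ℕ) - 1 then -(sfun n (m : ℤ) ((j : ℕ) : ℤ)) else 0) := by
        intro m _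
        exact if_congr (by omega) rfl rfl
      rw [Finset.sum_congr rfl hcong,
        Finset.sum_ite_eq' (Finset.range n) ((i : ℕ) - 1)
          fun m => -(sfun n (m : ℤ) ((j : ℕ) : ℤ)),
        if_pos (Finset.mem_range.mpr (by have := i.isLt; omega))]
      congr 1
      congr 1
      have := i.isLt
      push_cast [Nat.cast_sub (by omega : 1 ≤ (i : ℕ))]
      ring
  rw [T1, T2, T3]
  have key := sfun_second_diff n ((i : ℕ) : ℤ) ((j : ℕ) : ℤ)
    (by positivity) (by exact_mod_cast i.isLt) (by positivity) (by exact_mod_cast j.isLt)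
  have : 2 * sfun n ((i : ℕ) : ℤ) ((j : ℕ) : ℤ)
      + (-(sfun n (((i : ℕ) : ℤ) + 1) ((j : ℕ) : ℤ))
        + -(sfun n (((i : ℕ) : ℤ) - 1) ((j : ℕ) : ℤ)))
      = if ((i : ℕ) : ℤ) = ((j : ℕ) : ℤ) then 1 else 0 := by
    rw [← key]; ring
  rw [this, Matrix.one_apply]
  congr 1
  simp [Fin.ext_iff]

noncomputable def Vmat (n : ℕ) : Matrix (Fin n) (Fin 2) ℝ :=
  Matrix.of fun i k =>
    if k = 0 then Real.sqrt 2 * ((n : ℝ) - (i : ℕ)) / ((n : ℝ) + 1)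
    else Real.sqrt 2 * (((i : ℕ) : ℝ) + 1) / ((n : ℝ) + 1)

lemma Vmat_zero (n : ℕ) (i : Fin n) :
    Vmat n i 0 = Real.sqrt 2 * ((n : ℝ) - (i : ℕ)) / ((n : ℝ) + 1) := by
  simp [Vmat]

lemma Vmat_one (n : ℕ) (i : Fin n) :
    Vmat n i 1 = Real.sqrt 2 * (((i : ℕ) : ℝ) + 1) / ((n : ℝ) + 1) := by
  simp [Vmat]

lemma Umat_zero (n : ℕ) (i : Fin n) :
    Umat n i 0 = if (i : ℕ) = 0 then Real.sqrt 2 else 0 := by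
  simp [Umat]

lemma Umat_one (n : ℕ) (i : Fin n) :
    Umat n i 1 = if (i : ℕ) = n - 1 then Real.sqrt 2 else 0 := by
  simp [Umat]

lemma Smat_apply (n : ℕ) (i j : Fin n) : Smat n i j = sfun n ((i : ℕ) : ℤ) ((j : ℕ) : ℤ) := rfl

lemma SU (n : ℕ) (hn : 1 ≤ n) : Smat n * Umat n = Vmat n := by
  ext i k
  rw [Matrix.mul_apply]
  by_cases hk : k = 0
  · subst hk
    have hstep : ∀ j : Fin n, Smat n i j * Umat n j 0 =
        (fun m : ℕ => if m = 0 then sfun n ((i : ℕ) : ℤ) (m : ℤ) * Real.sqrt 2 else 0)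
          ((j : ℕ)) := by
      intro j
      rw [Smat_apply, Umat_zero]
      by_cases h : (j : ℕ) = 0 <;> simp [h]
    rw [Finset.sum_congr rfl (fun j _ => hstep j),
      Fin.sum_univ_eq_sum_range
        (fun m : ℕ => if m = 0 then sfun n ((i : ℕ) : ℤ) (m : ℤ) * Real.sqrt 2 else 0) n,
      Finset.sum_ite_eq' (Finset.range n) 0
        (fun m : ℕ => sfun n ((i : ℕ) : ℤ) (m : ℤ) * Real.sqrt 2),
      if_pos (Finset.mem_range.mpr (by omega)), Vmat_zero]
    rw [sfun_of_le n (by positivity)]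
    push_cast
    ring
  · have hk1 : k = 1 := by omega
    subst hk1
    have hstep : ∀ j : Fin n, Smat n i j * Umat n j 1 =
        (fun m : ℕ => if m = n - 1 then sfun n ((i : ℕ) : ℤ) (m : ℤ) * Real.sqrt 2 else 0)
          ((j : ℕ)) := by
      intro j
      rw [Smat_apply, Umat_one]
      by_cases h : (j : ℕ) = n - 1 <;> simp [h]
    rw [Finset.sum_congr rfl (fun j _ => hstep j),
      Fin.sum_univ_eq_sum_range
        (fun m : ℕ => if m = n - 1 then sfun n ((i : ℕ) : ℤ) (m : ℤ) * Real.sqrt 2 else 0) n,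
      Finset.sum_ite_eq' (Finset.range n) (n - 1)
        (fun m : ℕ => sfun n ((i : ℕ) : ℤ) (m : ℤ) * Real.sqrt 2),
      if_pos (Finset.mem_range.mpr (by omega)), Vmat_one]
    have hcast : (((n - 1 : ℕ) : ℕ) : ℤ) = (n : ℤ) - 1 := by omega
    rw [hcast]
    have hne := hn1ne n
    by_cases h : ((i : ℕ) : ℤ) = (n : ℤ) - 1
    · rw [sfun_of_le n (le_of_eq h.symm)]
      have hr : (((i : ℕ) : ℝ)) = (n : ℝ) - 1 := by exact_mod_cast h
      push_cast
      rw [hr]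
      field_simp
      ring
    · have hlt : ((i : ℕ) : ℤ) < (n : ℤ) - 1 := by
        have := i.isLt; omega
      rw [sfun_of_gt n hlt]
      push_cast
      field_simp
      ring

lemma VVt_entry (n : ℕ) (i j : Fin n) :
    (Vmat n * (Vmat n)ᵀ) i j =
      2 * (((n : ℝ) - (i : ℕ)) * ((n : ℝ) - (j : ℕ))
        + (((i : ℕ) : ℝ) + 1) * (((j : ℕ) : ℝ) + 1)) / ((n : ℝ) + 1) ^ 2 := by
  rw [Matrix.mul_apply, Fin.sum_univ_two, Matrix.transpose_apply, Matrix.transpose_apply,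
    Vmat_zero, Vmat_zero, Vmat_one, Vmat_one]
  have hs : Real.sqrt 2 * Real.sqrt 2 = 2 := Real.mul_self_sqrt (by norm_num)
  have hne := hn1ne n
  field_simp
  linear_combination ((((n : ℝ) - (i : ℕ)) * ((n : ℝ) - (j : ℕ))
    + (((i : ℕ) : ℝ) + 1) * (((j : ℕ) : ℝ) + 1)) * ((n : ℝ) + 1) ^ 2
    - (2 * (n : ℝ) + 2 * n * (i : ℕ) + 4 * n * (i : ℕ) * (j : ℕ) + 2 * n * (j : ℕ) + (n : ℝ) ^ 2
      - (n : ℝ) ^ 2 * (i : ℕ) + 2 * (n : ℝ) ^ 2 * (i : ℕ) * (j : ℕ) - (n : ℝ) ^ 2 * (j : ℕ)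
      + 2 * (n : ℝ) ^ 3 - (n : ℝ) ^ 3 * (i : ℕ) - (n : ℝ) ^ 3 * (j : ℕ) + (n : ℝ) ^ 4)) * hs

lemma sum_poly2 (n : ℕ) (A B C : ℝ) :
    ∑ m ∈ Finset.range n, (A + B * (m : ℝ) + C * (m : ℝ) ^ 2)
      = A * n + B * ((n : ℝ) * ((n : ℝ) - 1) / 2)
        + C * ((n : ℝ) * ((n : ℝ) - 1) * (2 * (n : ℝ) - 1) / 6) := by
  induction n with
  | zero => simp
  | succ k ih =>
    rw [Finset.sum_range_succ, ih]
    push_cast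
    ring

noncomputable def Pfun (n : ℕ) (x y : ℝ) : ℝ :=
  -(4 * (n : ℝ) ^ 2 + 8 * n + 6) / (((n : ℝ) + 1) * ((n : ℝ) ^ 2 + 2 * n + 3))
    + 6 / ((n : ℝ) ^ 2 + 2 * n + 3) * ((x + 1) + (y + 1))
    + (-12 / (((n : ℝ) + 1) * ((n : ℝ) ^ 2 + 2 * n + 3))) * (x + 1) * (y + 1)

noncomputable def cfun (n : ℕ) (x y : ℝ) : ℝ :=
  2 * (((n : ℝ) - x) * ((n : ℝ) - y) + (x + 1) * (y + 1)) / ((n : ℝ) + 1) ^ 2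

noncomputable def Nmat (n : ℕ) : Matrix (Fin n) (Fin n) ℝ :=
  Matrix.of fun i j => (if i = j then 1 else 0) + Pfun n ((i : ℕ) : ℝ) ((j : ℕ) : ℝ)

lemma Nmat_apply (n : ℕ) (i j : Fin n) :
    Nmat n i j = (if i = j then 1 else 0) + Pfun n ((i : ℕ) : ℝ) ((j : ℕ) : ℝ) := rfl

lemma d2ne (n : ℕ) : ((n : ℝ) ^ 2 + 2 * n + 3) ≠ 0 := by positivity

lemma VVt_entry' (n : ℕ) (i j : Fin n) :
    (Vmat n * (Vmat n)ᵀ) i j = cfun n ((i : ℕ) : ℝ) ((j : ℕ) : ℝ) :=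
  (VVt_entry n i j).trans rfl

set_option maxHeartbeats 1000000 in
lemma key_sum (n : ℕ) (x y : ℝ) :
    Pfun n x y + cfun n x y + ∑ m ∈ Finset.range n, cfun n x (m : ℝ) * Pfun n (m : ℝ) y
      = 0 := by
  have hne := hn1ne n
  have hne2 := d2ne n
  set q0 : ℝ := -(4 * (n : ℝ) ^ 2 + 8 * n + 6) / (((n : ℝ) + 1) * ((n : ℝ) ^ 2 + 2 * n + 3))
    with hq0
  set q1 : ℝ := 6 / ((n : ℝ) ^ 2 + 2 * n + 3) with hq1
  set q2 : ℝ := -12 / (((n : ℝ) + 1) * ((n : ℝ) ^ 2 + 2 * n + 3)) with hq2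
  set a0 : ℝ := 2 * (((n : ℝ) - x) * (n : ℝ) + (x + 1)) / ((n : ℝ) + 1) ^ 2 with ha0
  set a1 : ℝ := 2 * (2 * x + 1 - (n : ℝ)) / ((n : ℝ) + 1) ^ 2 with ha1
  set p0 : ℝ := q0 + q1 * (y + 2) + q2 * (y + 1) with hp0
  set p1 : ℝ := q1 + q2 * (y + 1) with hp1
  have hpt : ∀ m ∈ Finset.range n, cfun n x (m : ℝ) * Pfun n (m : ℝ) y
      = a0 * p0 + (a0 * p1 + a1 * p0) * (m : ℝ) + (a1 * p1) * (m : ℝ) ^ 2 := by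
    intro m _
    rw [cfun, Pfun, ha0, ha1, hp0, hp1, hq0, hq1, hq2]
    field_simp
    ring
  rw [Finset.sum_congr rfl hpt, sum_poly2]
  rw [cfun, Pfun, ha0, ha1, hp0, hp1, hq0, hq1, hq2]
  field_simp
  ring

lemma MN (n : ℕ) (hn : 1 ≤ n) :
    ((1 : Matrix (Fin n) (Fin n) ℝ) + Vmat n * (Vmat n)ᵀ) * Nmat n = 1 := by
  ext i j
  rw [Matrix.mul_apply]
  have hstep : ∀ k : Fin n,
      ((1 : Matrix (Fin n) (Fin n) ℝ) + Vmat n * (Vmat n)ᵀ) i k * Nmat n k j =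
      (fun m : ℕ =>
        (if (i : ℕ) = m then (if m = (j : ℕ) then (1 : ℝ) else 0) else 0)
        + ((if (i : ℕ) = m then Pfun n (m : ℝ) ((j : ℕ) : ℝ) else 0)
        + ((if m = (j : ℕ) then cfun n ((i : ℕ) : ℝ) (m : ℝ) else 0)
        + cfun n ((i : ℕ) : ℝ) (m : ℝ) * Pfun n (m : ℝ) ((j : ℕ) : ℝ)))) ((k : ℕ)) := by
    intro k
    rw [Matrix.add_apply, Matrix.one_apply, VVt_entry', Nmat_apply]
    show ((if i = k then (1:ℝ) else 0) + cfun n ((i : ℕ) : ℝ) ((k : ℕ) : ℝ))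
        * ((if k = j then (1:ℝ) else 0) + Pfun n ((k : ℕ) : ℝ) ((j : ℕ) : ℝ)) =
      (if (i : ℕ) = (k : ℕ) then (if (k : ℕ) = (j : ℕ) then (1 : ℝ) else 0) else 0)
        + ((if (i : ℕ) = (k : ℕ) then Pfun n ((k : ℕ) : ℝ) ((j : ℕ) : ℝ) else 0)
        + ((if (k : ℕ) = (j : ℕ) then cfun n ((i : ℕ) : ℝ) ((k : ℕ) : ℝ) else 0)
        + cfun n ((i : ℕ) : ℝ) ((k : ℕ) : ℝ) * Pfun n ((k : ℕ) : ℝ) ((j : ℕ) : ℝ)))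
    simp only [Fin.ext_iff]
    split_ifs <;> first | ring1 | (exfalso; omega)
  rw [Finset.sum_congr rfl (fun k _ => hstep k),
    Fin.sum_univ_eq_sum_range (fun m : ℕ =>
        (if (i : ℕ) = m then (if m = (j : ℕ) then (1 : ℝ) else 0) else 0)
        + ((if (i : ℕ) = m then Pfun n (m : ℝ) ((j : ℕ) : ℝ) else 0)
        + ((if m = (j : ℕ) then cfun n ((i : ℕ) : ℝ) (m : ℝ) else 0)
        + cfun n ((i : ℕ) : ℝ) (m : ℝ) * Pfun n (m : ℝ) ((j : ℕ) : ℝ)))) n,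
    Finset.sum_add_distrib, Finset.sum_add_distrib, Finset.sum_add_distrib]
  rw [Finset.sum_ite_eq (Finset.range n) ((i : ℕ))
      (fun m => if m = (j : ℕ) then (1 : ℝ) else 0),
    Finset.sum_ite_eq (Finset.range n) ((i : ℕ))
      (fun m => Pfun n (m : ℝ) ((j : ℕ) : ℝ)),
    Finset.sum_ite_eq' (Finset.range n) ((j : ℕ))
      (fun m => cfun n ((i : ℕ) : ℝ) (m : ℝ)),
    if_pos (Finset.mem_range.mpr i.isLt), if_pos (Finset.mem_range.mpr i.isLt),
    if_pos (Finset.mem_range.mpr j.isLt)]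
  have hk := key_sum n ((i : ℕ) : ℝ) ((j : ℕ) : ℝ)
  have hsum : ∑ m ∈ Finset.range n,
      cfun n ((i : ℕ) : ℝ) (m : ℝ) * Pfun n (m : ℝ) ((j : ℕ) : ℝ)
      = -(Pfun n ((i : ℕ) : ℝ) ((j : ℕ) : ℝ) + cfun n ((i : ℕ) : ℝ) ((j : ℕ) : ℝ)) := by
    linarith [hk]
  rw [hsum, Matrix.one_apply]
  by_cases h : i = j
  · rw [if_pos h, if_pos (show (i : ℕ) = (j : ℕ) by rw [h])]; ring
  · rw [if_neg h, if_neg (fun hh => h (Fin.ext hh))]; ring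

/-- Explicit entries of `M = (I + T⁻¹U (T⁻¹U)ᵗ)⁻¹`: with
`q₀ = -(4n²+8n+6)/((n+1)(n²+2n+3))`, `q₁ = 6/(n²+2n+3)`,
`q₂ = -12/((n+1)(n²+2n+3))` (1-based indices `i' = i+1`, `j' = j+1`),
`m_{i,j} = q₀ + q₁(i'+j') + q₂ i' j'` off the diagonal and
`m_{i,i} = 1 + q₀ + 2 q₁ i' + q₂ i'²` on the diagonal. -/
theorem M_entries_explicit (n : ℕ) (hn : 1 ≤ n) :
    IsUnit ((1 : Matrix (Fin n) (Fin n) ℝ) + (Tmat n)⁻¹ * Umat n * ((Tmat n)⁻¹ * Umat n)ᵀ) ∧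
    ∀ i j : Fin n,
      ((1 : Matrix (Fin n) (Fin n) ℝ) + (Tmat n)⁻¹ * Umat n * ((Tmat n)⁻¹ * Umat n)ᵀ)⁻¹ i j =
        (let x : ℝ := (i : ℕ) + 1
         let y : ℝ := (j : ℕ) + 1
         let q0 : ℝ := -(4 * (n : ℝ) ^ 2 + 8 * n + 6) / (((n : ℝ) + 1) * ((n : ℝ) ^ 2 + 2 * n + 3))
         let q1 : ℝ := 6 / ((n : ℝ) ^ 2 + 2 * n + 3)
         let q2 : ℝ := -12 / (((n : ℝ) + 1) * ((n : ℝ) ^ 2 + 2 * n + 3))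
         if i = j then 1 + q0 + 2 * q1 * x + q2 * x ^ 2
         else q0 + q1 * (x + y) + q2 * x * y) := by
  have hTinv : (Tmat n)⁻¹ = Smat n := Matrix.inv_eq_right_inv (TS n)
  have hV : (Tmat n)⁻¹ * Umat n = Vmat n := by rw [hTinv, SU n hn]
  have hM : ((1 : Matrix (Fin n) (Fin n) ℝ) + (Tmat n)⁻¹ * Umat n * ((Tmat n)⁻¹ * Umat n)ᵀ)
      = 1 + Vmat n * (Vmat n)ᵀ := by rw [hV]
  constructor
  · rw [hM]
    have hd : IsUnit ((1 : Matrix (Fin n) (Fin n) ℝ) + Vmat n * (Vmat n)ᵀ).det :=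
      IsUnit.of_mul_eq_one _ (by rw [← Matrix.det_mul, MN n hn, Matrix.det_one])
    exact (Matrix.isUnit_iff_isUnit_det _).mpr hd
  · intro i j
    rw [hM, Matrix.inv_eq_right_inv (MN n hn), Nmat_apply]
    show (if i = j then (1:ℝ) else 0) + Pfun n ((i : ℕ) : ℝ) ((j : ℕ) : ℝ) =
      if i = j then
        1 + -(4 * (n : ℝ) ^ 2 + 8 * n + 6) / (((n : ℝ) + 1) * ((n : ℝ) ^ 2 + 2 * n + 3))
          + 2 * (6 / ((n : ℝ) ^ 2 + 2 * n + 3)) * (((i : ℕ) : ℝ) + 1)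
          + (-12 / (((n : ℝ) + 1) * ((n : ℝ) ^ 2 + 2 * n + 3))) * (((i : ℕ) : ℝ) + 1) ^ 2
      else
        -(4 * (n : ℝ) ^ 2 + 8 * n + 6) / (((n : ℝ) + 1) * ((n : ℝ) ^ 2 + 2 * n + 3))
          + 6 / ((n : ℝ) ^ 2 + 2 * n + 3) * ((((i : ℕ) : ℝ) + 1) + (((j : ℕ) : ℝ) + 1))
          + (-12 / (((n : ℝ) + 1) * ((n : ℝ) ^ 2 + 2 * n + 3))) * (((i : ℕ) : ℝ) + 1)
            * (((j : ℕ) : ℝ) + 1)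
    by_cases h : i = j
    · subst h
      rw [if_pos rfl, if_pos rfl, Pfun]
      ring
    · rw [if_neg h, if_neg h, Pfun]
      ring
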